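/- Let P be a finite poset. The map sending a P-array A = {A_{i,j}} to the coloring κ: P → ℤ₊ with κ(A_{i,j}) = i is a bijection between P-arrays and proper colorings of the incomparability graph inc(P). -/

import Mathlib

open scoped Classical

/-- Two elements of a poset are incomparable. -/
def Incomp {α : Type*} [Preorder α] (x y : α) : Prop := ¬ x ≤ y ∧ ¬ y ≤ x

/-- A `P`-array: an indexing of the elements of `P` by positions `(i,j)` (rows and
columns, indexed from 0) in which every element appears exactly once and each row
is increasing from left to right with no gaps. -/
structure PArray (P : Type*) [PartialOrder P] where
  entry : ℕ → ℕ → Option P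
  exists_unique : ∀ x : P, ∃! ij : ℕ × ℕ, entry ij.1 ij.2 = some x
  row_chain : ∀ i j x, entry i (j + 1) = some x → ∃ y, entry i j = some y ∧ y < x

namespace PArrayProof

variable {P : Type*} [PartialOrder P]

lemma entry_inj (A : PArray P) {i j : ℕ} {x y : P}
    (hx : A.entry i j = some x) (hy : A.entry i j = some y) : x = y := by
  rw [hx] at hy; exact Option.some_inj.mp hy

lemma defined_lt_aux (A : PArray P) (i : ℕ) :
    ∀ k j (x : P), A.entry i (j + k + 1) = some x → ∃ y, A.entry i j = some y ∧ y < x := by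
  intro k
  induction k with
  | zero => intro j x hx; exact A.row_chain i j x hx
  | succ k ih =>
    intro j x hx
    have hx' : A.entry i ((j + 1) + k + 1) = some x := by
      have h : (j + 1) + k + 1 = j + (k + 1) + 1 := by omega
      rw [h]; exact hx
    obtain ⟨z, hz, hzx⟩ := ih (j + 1) x hx'
    obtain ⟨y, hy, hyz⟩ := A.row_chain i j z hz
    exact ⟨y, hy, hyz.trans hzx⟩

lemma defined_of_lt (A : PArray P) {i j j' : ℕ} {x : P}
    (hx : A.entry i j = some x) (h : j' < j) :
    ∃ y, A.entry i j' = some y ∧ y < x := by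
  have h' : A.entry i (j' + (j - j' - 1) + 1) = some x := by
    have : j' + (j - j' - 1) + 1 = j := by omega
    rw [this]; exact hx
  exact defined_lt_aux A i _ j' x h'

lemma lt_of_pos_lt (A : PArray P) {i j j' : ℕ} {x y : P}
    (hy : A.entry i j' = some y) (hx : A.entry i j = some x) (h : j' < j) : y < x := by
  obtain ⟨y', hy', h'⟩ := defined_of_lt A hx h
  rw [entry_inj A hy hy']; exact h'

noncomputable def rowOf (A : PArray P) (x : P) : ℕ := (A.exists_unique x).choose.1
noncomputable def colOf (A : PArray P) (x : P) : ℕ := (A.exists_unique x).choose.2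

lemma entry_pos (A : PArray P) (x : P) :
    A.entry (rowOf A x) (colOf A x) = some x := (A.exists_unique x).choose_spec.1

lemma pos_eq (A : PArray P) {i j : ℕ} {x : P} (h : A.entry i j = some x) :
    rowOf A x = i ∧ colOf A x = j := by
  have h' := (A.exists_unique x).choose_spec.2 (i, j) h
  exact ⟨by rw [rowOf, ← h'], by rw [colOf, ← h']⟩

lemma proper (A : PArray P) : ∀ u v, Incomp u v → rowOf A u ≠ rowOf A v := by
  intro u v h hrow
  rcases lt_trichotomy (colOf A u) (colOf A v) with hc | hc | hc
  · have hv : A.entry (rowOf A u) (colOf A v) = some v := by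
      rw [hrow]; exact entry_pos A v
    exact h.1 (lt_of_pos_lt A (entry_pos A u) hv hc).le
  · have hv : A.entry (rowOf A u) (colOf A u) = some v := by
      rw [hrow, hc]; exact entry_pos A v
    have he := entry_inj A (entry_pos A u) hv
    exact h.1 (he ▸ le_refl u)
  · have hv : A.entry (rowOf A u) (colOf A v) = some v := by
      rw [hrow]; exact entry_pos A v
    exact h.2 (lt_of_pos_lt A hv (entry_pos A u) hc).le

variable [Fintype P]

noncomputable def cset (κ : P → ℕ) (x : P) : Finset P :=
  Finset.univ.filter (fun y => κ y = κ x ∧ y < x)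

noncomputable def cnt (κ : P → ℕ) (x : P) : ℕ := (cset κ x).card

lemma mem_cset {κ : P → ℕ} {x y : P} : y ∈ cset κ x ↔ κ y = κ x ∧ y < x := by
  simp [cset]

lemma comp_of_eq {κ : P → ℕ} (hκ : ∀ u v, Incomp u v → κ u ≠ κ v) {u v : P}
    (h : κ u = κ v) : u ≤ v ∨ v ≤ u := by
  by_contra hc
  push_neg at hc
  exact hκ u v ⟨hc.1, hc.2⟩ h

lemma cnt_lt {κ : P → ℕ} (hκ : ∀ u v, Incomp u v → κ u ≠ κ v) {u v : P}
    (h : κ u = κ v) (huv : u < v) : cnt κ u < cnt κ v := by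
  have hsub : cset κ u ⊆ cset κ v := by
    intro y hy
    rw [mem_cset] at *
    exact ⟨hy.1.trans h, hy.2.trans huv⟩
  apply Finset.card_lt_card
  rw [Finset.ssubset_iff_of_subset hsub]
  exact ⟨u, mem_cset.mpr ⟨h, huv⟩, fun hm => lt_irrefl u (mem_cset.mp hm).2⟩

lemma cnt_inj {κ : P → ℕ} (hκ : ∀ u v, Incomp u v → κ u ≠ κ v) {u v : P}
    (h : κ u = κ v) (hc : cnt κ u = cnt κ v) : u = v := by
  rcases comp_of_eq hκ h with hle | hle
  · rcases hle.lt_or_eq with hlt | he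
    · exact absurd hc (cnt_lt hκ h hlt).ne
    · exact he
  · rcases hle.lt_or_eq with hlt | he
    · exact absurd hc.symm (cnt_lt hκ h.symm hlt).ne
    · exact he.symm

lemma cnt_succ {κ : P → ℕ} (hκ : ∀ u v, Incomp u v → κ u ≠ κ v) {x : P} {j : ℕ}
    (h : cnt κ x = j + 1) : ∃ y, κ y = κ x ∧ y < x ∧ cnt κ y = j := by
  have hne : (cset κ x).Nonempty := Finset.card_pos.mp (by rw [← cnt]; omega)
  obtain ⟨y, hy0, hmax'⟩ := Finset.exists_maximal hne
  have hmax : ∀ z ∈ cset κ x, ¬ y < z := fun z hz hlt => hlt.not_ge (hmax' hz hlt.le)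
  have hy := mem_cset.mp hy0
  refine ⟨y, hy.1, hy.2, ?_⟩
  have heq : cset κ y = (cset κ x).erase y := by
    ext z
    rw [Finset.mem_erase, mem_cset, mem_cset]
    constructor
    · rintro ⟨h1, h2⟩
      exact ⟨h2.ne, h1.trans hy.1, h2.trans hy.2⟩
    · rintro ⟨hzne, h1, h2⟩
      refine ⟨h1.trans hy.1.symm, ?_⟩
      rcases comp_of_eq hκ (show κ z = κ y from h1.trans hy.1.symm) with hzy | hyz
      · exact hzy.lt_of_ne hzne
      · exact absurd ((hyz.lt_of_ne (Ne.symm hzne))) (hmax z (mem_cset.mpr ⟨h1, h2⟩))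
  rw [cnt, heq, Finset.card_erase_of_mem hy0, ← cnt, h]
  omega

noncomputable def ofColoring (κ : P → ℕ) (hκ : ∀ u v, Incomp u v → κ u ≠ κ v) :
    PArray P where
  entry i j := if h : ∃ x, κ x = i ∧ cnt κ x = j then some h.choose else none
  exists_unique x := by
    refine ⟨(κ x, cnt κ x), ?_, ?_⟩
    · have h : ∃ y, κ y = κ x ∧ cnt κ y = cnt κ x := ⟨x, rfl, rfl⟩
      simp only [dif_pos h]
      exact congrArg some (cnt_inj hκ h.choose_spec.1 h.choose_spec.2)
    · rintro ⟨i, j⟩ hij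
      simp only at hij
      split_ifs at hij with h
      · have hex := Option.some_inj.mp hij
        obtain ⟨h1, h2⟩ := h.choose_spec
        rw [hex] at h1 h2
        simp [← h1, ← h2]
  row_chain i j x hx := by
    split_ifs at hx with h
    · have hcx := h.choose_spec
      have hex : h.choose = x := Option.some_inj.mp hx
      rw [hex] at hcx
      obtain ⟨y, hy1, hy2, hy3⟩ := cnt_succ hκ hcx.2
      have h' : ∃ z, κ z = i ∧ cnt κ z = j := ⟨y, hy1.trans hcx.1, hy3⟩
      refine ⟨y, ?_, hy2⟩
      simp only [dif_pos h']
      exact congrArg some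
        (cnt_inj hκ (h'.choose_spec.1.trans (hy1.trans hcx.1).symm)
          (h'.choose_spec.2.trans hy3.symm))

lemma ofColoring_some {κ : P → ℕ} {hκ : ∀ u v, Incomp u v → κ u ≠ κ v}
    {i j : ℕ} {x : P} :
    (ofColoring κ hκ).entry i j = some x ↔ κ x = i ∧ cnt κ x = j := by
  constructor
  · intro hx
    simp only [ofColoring] at hx
    split_ifs at hx with h
    · have hex := Option.some_inj.mp hx
      obtain ⟨h1, h2⟩ := h.choose_spec
      rw [hex] at h1 h2
      exact ⟨h1, h2⟩
  · rintro ⟨rfl, rfl⟩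
    have h : ∃ y, κ y = κ x ∧ cnt κ y = cnt κ x := ⟨x, rfl, rfl⟩
    simp only [ofColoring, dif_pos h]
    exact congrArg some (cnt_inj hκ h.choose_spec.1 h.choose_spec.2)

lemma cnt_rowOf (A : PArray P) (x : P) : cnt (rowOf A) x = colOf A x := by
  rw [cnt, ← Finset.card_range (colOf A x)]
  apply Finset.card_bij (fun y _ => colOf A y)
  · intro y hy
    rw [mem_cset] at hy
    rw [Finset.mem_range]
    have hy' : A.entry (rowOf A x) (colOf A y) = some y := by
      rw [← hy.1]; exact entry_pos A y
    by_contra hcon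
    push_neg at hcon
    rcases hcon.lt_or_eq with h | h
    · exact absurd (lt_of_pos_lt A (entry_pos A x) hy' h) (lt_asymm hy.2)
    · rw [← h] at hy'
      exact hy.2.ne (entry_inj A hy' (entry_pos A x))
  · intro y1 h1 y2 h2 he
    rw [mem_cset] at h1 h2
    have e1 : A.entry (rowOf A x) (colOf A y1) = some y1 := by
      rw [← h1.1]; exact entry_pos A y1
    have e2 : A.entry (rowOf A x) (colOf A y2) = some y2 := by
      rw [← h2.1]; exact entry_pos A y2
    rw [he] at e1
    exact entry_inj A e1 e2
  · intro j hj
    rw [Finset.mem_range] at hj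
    obtain ⟨y, hy, hyx⟩ := defined_of_lt A (entry_pos A x) hj
    have hp := pos_eq A hy
    exact ⟨y, mem_cset.mpr ⟨hp.1, hyx⟩, hp.2⟩

lemma entry_some_iff (A : PArray P) {i j : ℕ} {x : P} :
    A.entry i j = some x ↔ rowOf A x = i ∧ cnt (rowOf A) x = j := by
  rw [cnt_rowOf]
  constructor
  · exact pos_eq A
  · rintro ⟨rfl, rfl⟩
    exact entry_pos A x

lemma PArray.ext' {A B : PArray P} (h : A.entry = B.entry) : A = B := by
  cases A; cases B; cases h; rfl

lemma left_inv (A : PArray P) : ofColoring (rowOf A) (proper A) = A := by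
  apply PArray.ext'
  funext i j
  apply Option.ext
  intro x
  rw [ofColoring_some, entry_some_iff]

lemma right_inv (κ : P → ℕ) (hκ : ∀ u v, Incomp u v → κ u ≠ κ v) (x : P) :
    rowOf (ofColoring κ hκ) x = κ x := by
  have h := (ofColoring_some (hκ := hκ) (i := κ x) (j := cnt κ x) (x := x)).mpr ⟨rfl, rfl⟩
  exact (pos_eq _ h).1

end PArrayProof

/-- The map sending a `P`-array to the coloring assigning to each element its row index
is a bijection between `P`-arrays and proper colorings of the incomparability graph. -/
theorem stmt_6 {P : Type*} [PartialOrder P] [Fintype P] :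
    ∃ e : PArray P ≃ {κ : P → ℕ // ∀ u v : P, Incomp u v → κ u ≠ κ v},
      ∀ (A : PArray P) (i j : ℕ) (x : P), A.entry i j = some x → (e A).1 x = i := by
  refine ⟨⟨fun A => ⟨PArrayProof.rowOf A, PArrayProof.proper A⟩,
    fun κ => PArrayProof.ofColoring κ.1 κ.2, ?_, ?_⟩, ?_⟩
  · intro A
    exact PArrayProof.left_inv A
  · intro κ
    exact Subtype.ext (funext (PArrayProof.right_inv κ.1 κ.2))
  · intro A i j x h
    exact (PArrayProof.pos_eq A h).1
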